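/- Let T be the 3×3 real matrix with rows (√2/2, √2/2, 0), (-√2/2, √2/2, 0), (0, 0, 1). If x : ZMod 8 → (Fin 3 → ℝ) satisfies the Eckart condition, then the map y defined by y i = T.mulVec (x (i+1)) also satisfies the Eckart condition. (This is the generator of the C₈-action by cyclic relabeling on standard realizations.) -/

import Mathlib

open Real Matrix

/-- The planar regular octagon reference configuration:
`xpln i = (cos ((2i-1)π/8), sin ((2i-1)π/8), 0)`, using the integer lift `i.val`;
this is well defined on `ZMod 8` since the expression is unchanged under `i ↦ i + 8`. -/
noncomputable def xpln (i : ZMod 8) : Fin 3 → ℝ :=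
  ![Real.cos ((2 * (i.val : ℝ) - 1) * π / 8), Real.sin ((2 * (i.val : ℝ) - 1) * π / 8), 0]

/-- The Eckart condition with respect to the reference octagon `xpln`. -/
def EckartCondition (x : ZMod 8 → Fin 3 → ℝ) : Prop :=
  (∑ i : ZMod 8, x i = 0) ∧ (∑ i : ZMod 8, (xpln i) ⨯₃ (x i) = 0)

/-- The rotation by `π/4` about the `z`-axis. -/
noncomputable def T : Matrix (Fin 3) (Fin 3) ℝ :=
  !![Real.sqrt 2 / 2,  Real.sqrt 2 / 2, 0;
     -Real.sqrt 2 / 2, Real.sqrt 2 / 2, 0;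
     0, 0, 1]

lemma Tvec (u : Fin 3 → ℝ) :
    T.mulVec u = ![Real.sqrt 2 / 2 * (u 0 + u 1), Real.sqrt 2 / 2 * (u 1 - u 0), u 2] := by
  funext k
  fin_cases k <;>
    simp [T, Matrix.mulVec, dotProduct, Fin.sum_univ_three] <;> ring

lemma cross_T (u v : Fin 3 → ℝ) :
    (T.mulVec u) ⨯₃ (T.mulVec v) = T.mulVec (u ⨯₃ v) := by
  have h2 : Real.sqrt 2 * Real.sqrt 2 = 2 := Real.mul_self_sqrt (by norm_num)
  rw [Tvec, Tvec, Tvec]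
  funext k
  fin_cases k
  · simp [crossProduct]; ring
  · simp [crossProduct]; ring
  · simp [crossProduct]
    linear_combination (u 0 * v 1 / 2 - u 1 * v 0 / 2) * h2

lemma hT (j : ZMod 8) : T.mulVec (xpln j) = xpln (j - 1) := by
  have hc : ∀ θ:ℝ, Real.sqrt 2/2*(Real.cos θ + Real.sin θ) = Real.cos (θ - π/4) := by
    intro θ; rw [Real.cos_sub, Real.cos_pi_div_four, Real.sin_pi_div_four]; ring
  have hs : ∀ θ:ℝ, Real.sqrt 2/2*(Real.sin θ - Real.cos θ) = Real.sin (θ - π/4) := by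
    intro θ; rw [Real.sin_sub, Real.cos_pi_div_four, Real.sin_pi_div_four]; ring
  rw [Tvec]
  funext k
  have keyc : ∀ a b : ℝ, a = b - 2 * π → Real.cos a = Real.cos b := by
    intro a b h; rw [h, Real.cos_sub_two_pi]
  have keys : ∀ a b : ℝ, a = b - 2 * π → Real.sin a = Real.sin b := by
    intro a b h; rw [h, Real.sin_sub_two_pi]
  have hj8 : j = 0 ∨ j = 1 ∨ j = 2 ∨ j = 3 ∨ j = 4 ∨ j = 5 ∨ j = 6 ∨ j = 7 := by
    revert j; decide
  rcases hj8 with rfl | rfl | rfl | rfl | rfl | rfl | rfl | rfl <;> fin_cases k <;>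
    simp [xpln, -ZMod.natCast_val, (by decide : ((-1 : ZMod 8)).val = 7),
      (by decide : ((0 : ZMod 8)).val = 0), (by decide : ((1 : ZMod 8)).val = 1),
      (by decide : ((2 : ZMod 8)).val = 2), (by decide : ((3 : ZMod 8)).val = 3),
      (by decide : ((4 : ZMod 8)).val = 4), (by decide : ((5 : ZMod 8)).val = 5),
      (by decide : ((6 : ZMod 8)).val = 6), (by decide : ((7 : ZMod 8)).val = 7),
      (by decide : ((0 - 1 : ZMod 8)).val = 7), (by decide : ((1 - 1 : ZMod 8)).val = 0),
      (by decide : ((2 - 1 : ZMod 8)).val = 1), (by decide : ((3 - 1 : ZMod 8)).val = 2),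
      (by decide : ((4 - 1 : ZMod 8)).val = 3), (by decide : ((5 - 1 : ZMod 8)).val = 4),
      (by decide : ((6 - 1 : ZMod 8)).val = 5), (by decide : ((7 - 1 : ZMod 8)).val = 6)]
  all_goals first
    | (rw [hc]; refine congrArg Real.cos ?_; push_cast; ring1)
    | (rw [hs]; refine congrArg Real.sin ?_; push_cast; ring1)
    | (rw [hc]; refine keyc _ _ ?_; push_cast; ring1)
    | (rw [hs]; refine keys _ _ ?_; push_cast; ring1)

lemma mulVec_sum (f : ZMod 8 → Fin 3 → ℝ) :
    ∑ i : ZMod 8, T.mulVec (f i) = T.mulVec (∑ i : ZMod 8, f i) := by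
  simp only [← Matrix.mulVecLin_apply, ← map_sum]

theorem eckartCondition_of_cyclic_shift
    (x : ZMod 8 → Fin 3 → ℝ) (hx : EckartCondition x) :
    EckartCondition (fun i => T.mulVec (x (i + 1))) := by
  obtain ⟨h1, h2⟩ := hx
  constructor
  · have hre : (∑ i : ZMod 8, x (i + 1)) = ∑ i : ZMod 8, x i :=
      Fintype.sum_equiv (Equiv.addRight 1) _ _ (fun i => rfl)
    calc (∑ i : ZMod 8, T.mulVec (x (i + 1)))
        = T.mulVec (∑ i : ZMod 8, x (i + 1)) := mulVec_sum _
      _ = 0 := by rw [hre, h1, Matrix.mulVec_zero]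
  · have hre : (∑ i : ZMod 8, xpln i ⨯₃ T.mulVec (x (i + 1)))
        = ∑ j : ZMod 8, xpln (j - 1) ⨯₃ T.mulVec (x j) :=
      Fintype.sum_equiv (Equiv.addRight 1) _ _ (fun i => by simp)
    calc (∑ i : ZMod 8, xpln i ⨯₃ T.mulVec (x (i + 1)))
        = ∑ j : ZMod 8, (T.mulVec (xpln j)) ⨯₃ (T.mulVec (x j)) := by
          rw [hre]; refine Finset.sum_congr rfl (fun j _ => ?_); rw [hT j]
      _ = ∑ j : ZMod 8, T.mulVec (xpln j ⨯₃ x j) := by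
          refine Finset.sum_congr rfl (fun j _ => cross_T _ _)
      _ = 0 := by rw [mulVec_sum, h2, Matrix.mulVec_zero]
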